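/- For c bounded measurable, the map F^{(c,ε)}: L^∞(ρ₁) → L^p(ρ₂), u ↦ u^{(c,ε)}, is a compact operator for every 1 ≤ p < ∞: the image of any bounded subset of L^∞(ρ₁) is precompact in L^p(ρ₂). -/

import Mathlib

open MeasureTheory Real Filter Topology

noncomputable section

/-- The entropic `(c,ε)`-transform of `u`. -/
def transform {X Y : Type*} [MeasurableSpace X] (ρ₁ : Measure X)
    (c : X → Y → ℝ) (ε : ℝ) (u : X → ℝ) : Y → ℝ :=
  fun y => -ε * Real.log (∫ x, Real.exp ((u x - c x y) / ε) ∂ρ₁)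

/-- Integrability and integral bounds for a function with two-sided pointwise bounds,
with respect to a probability measure. -/
private lemma integral_bounds {X : Type*} [MeasurableSpace X] (ρ₁ : Measure X)
    [IsProbabilityMeasure ρ₁] {w : X → ℝ} (hw : AEStronglyMeasurable w ρ₁) {a b : ℝ}
    (h1 : ∀ x, a ≤ w x) (h2 : ∀ x, w x ≤ b) :
    Integrable w ρ₁ ∧ a ≤ ∫ x, w x ∂ρ₁ ∧ ∫ x, w x ∂ρ₁ ≤ b := by
  have hi : Integrable w ρ₁ := by
    refine Integrable.mono' (integrable_const (max |a| |b|)) hw ?_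
    filter_upwards with x
    rw [Real.norm_eq_abs, abs_le]
    constructor
    · calc -max |a| |b| ≤ -|a| := neg_le_neg (le_max_left _ _)
        _ ≤ a := neg_abs_le a
        _ ≤ w x := h1 x
    · calc w x ≤ b := h2 x
        _ ≤ |b| := le_abs_self b
        _ ≤ max |a| |b| := le_max_right _ _
  refine ⟨hi, ?_, ?_⟩
  · calc a = ∫ _x, a ∂ρ₁ := by simp
      _ ≤ ∫ x, w x ∂ρ₁ := integral_mono (integrable_const a) hi h1
  · calc ∫ x, w x ∂ρ₁ ≤ ∫ _x, b ∂ρ₁ := integral_mono hi (integrable_const b) h2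
      _ = b := by simp

/-- The entropic `(c,ε)`-transform is a compact operator from `L^∞(ρ₁)` to `L^p(ρ₂)`:
the image of any bounded set of (everywhere-defined, measurable) bounded functions is
precompact in `L^p(ρ₂)`. -/
theorem transform_compact_operator
    {X Y : Type*}
    [MeasurableSpace X] [TopologicalSpace X] [PolishSpace X] [BorelSpace X]
    [MeasurableSpace Y] [TopologicalSpace Y] [PolishSpace Y] [BorelSpace Y]
    (ρ₁ : Measure X) [IsProbabilityMeasure ρ₁]
    (ρ₂ : Measure Y) [IsProbabilityMeasure ρ₂]
    (ε : ℝ) (hε : 0 < ε)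
    (c : X → Y → ℝ) (hc : Measurable (Function.uncurry c))
    (M : ℝ) (hM : ∀ x y, |c x y| ≤ M)
    (p : ENNReal) (hp : 1 ≤ p) (hp' : p ≠ ⊤)
    (R : ℝ) :
    ∀ u : ℕ → X → ℝ, (∀ n, Measurable (u n)) → (∀ n x, |u n x| ≤ R) →
      ∃ (φ : ℕ → ℕ) (g : Y → ℝ), StrictMono φ ∧
        Tendsto (fun n => eLpNorm (fun y => transform ρ₁ c ε (u (φ n)) y - g y) p ρ₂)
          atTop (nhds 0) := by
  intro u hu hub
  have hε' : ε ≠ 0 := hε.ne'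
  set K : ℝ := R + M with hK
  set E : ℝ := Real.exp (R / ε) with hE
  have hEpos : 0 < E := Real.exp_pos _
  -- the linearizing functions
  set f : ℕ → X → ℝ := fun n x => Real.exp (u n x / ε) with hfdef
  set h : Y → X → ℝ := fun y x => Real.exp (-c x y / ε) with hhdef
  have hfm : ∀ n, Measurable (f n) := fun n => ((hu n).div_const ε).exp
  have hcm : ∀ y, Measurable fun x => c x y := fun y =>
    hc.comp (measurable_id.prodMk measurable_const)
  have hhm : ∀ y, Measurable (h y) := fun y => (((hcm y).neg).div_const ε).exp
  have hfb : ∀ n x, f n x ≤ E := by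
    intro n x
    refine Real.exp_le_exp.2 ?_
    gcongr
    exact (abs_le.1 (hub n x)).2
  have hmul : ∀ n y x, Real.exp ((u n x - c x y) / ε) = f n x * h y x := by
    intro n y x
    simp only [hfdef, hhdef, ← Real.exp_add, ← add_div, sub_eq_add_neg]
  -- the key integrals
  set Ifun : ℕ → Y → ℝ := fun n y => ∫ x, f n x * h y x ∂ρ₁ with hIdef
  have hprod_lb : ∀ n y x, Real.exp (-K / ε) ≤ f n x * h y x := by
    intro n y x
    rw [← hmul]
    refine Real.exp_le_exp.2 ?_
    gcongr
    have h1 := abs_le.1 (hub n x)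
    have h2 := abs_le.1 (hM x y)
    simp only [hK]
    linarith [h1.1, h2.2]
  have hprod_ub : ∀ n y x, f n x * h y x ≤ Real.exp (K / ε) := by
    intro n y x
    rw [← hmul]
    refine Real.exp_le_exp.2 ?_
    gcongr
    have h1 := abs_le.1 (hub n x)
    have h2 := abs_le.1 (hM x y)
    simp only [hK]
    linarith [h1.2, h2.1]
  have hIbd : ∀ n y, Integrable (fun x => f n x * h y x) ρ₁ ∧
      Real.exp (-K / ε) ≤ Ifun n y ∧ Ifun n y ≤ Real.exp (K / ε) := by
    intro n y
    exact integral_bounds ρ₁ ((hfm n).mul (hhm y)).aestronglyMeasurable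
      (hprod_lb n y) (hprod_ub n y)
  -- rewriting the transform
  have htr : ∀ n y, transform ρ₁ c ε (u n) y = -ε * Real.log (Ifun n y) := by
    intro n y
    unfold transform
    rw [show (∫ x, Real.exp ((u n x - c x y) / ε) ∂ρ₁) = Ifun n y from
      integral_congr_ae (.of_forall fun x => hmul n y x)]
  -- a countable dense family in L¹(ρ₁)
  haveI : Fact ((1 : ENNReal) ≤ 1) := ⟨le_rfl⟩
  haveI : Fact ((1 : ENNReal) ≠ ⊤) := ⟨by simp⟩
  haveI : MeasureTheory.IsSeparable ρ₁ := inferInstance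
  haveI : SecondCountableTopology (Lp ℝ 1 ρ₁) := MeasureTheory.Lp.SecondCountableTopology
  haveI : TopologicalSpace.SeparableSpace (Lp ℝ 1 ρ₁) := inferInstance
  haveI : Nonempty (Lp ℝ 1 ρ₁) := ⟨0⟩
  set e : ℕ → Lp ℝ 1 ρ₁ := TopologicalSpace.denseSeq (Lp ℝ 1 ρ₁) with hedef
  have he : DenseRange e := TopologicalSpace.denseRange_denseSeq _
  have hek : ∀ k, Integrable (⇑(e k)) ρ₁ := fun k => L1.integrable_coeFn (e k)
  set ψ : ℕ → ℕ → ℝ := fun n k => ∫ x, f n x * (e k) x ∂ρ₁ with hψdef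
  have hψint : ∀ n k, Integrable (fun x => f n x * (e k) x) ρ₁ := by
    intro n k
    have := Integrable.bdd_mul (hek k) (hfm n).aestronglyMeasurable (c := E)
      (.of_forall fun x => by rw [Real.norm_eq_abs, abs_of_pos (Real.exp_pos _)]; exact hfb n x)
    simpa [Pi.mul_def] using this
  -- the key comparison estimate
  have hdiff : ∀ n (g₁ g₂ : X → ℝ), Integrable (fun x => f n x * g₁ x) ρ₁ →
      Integrable (fun x => f n x * g₂ x) ρ₁ → Integrable (fun x => g₁ x - g₂ x) ρ₁ →
      |(∫ x, f n x * g₁ x ∂ρ₁) - ∫ x, f n x * g₂ x ∂ρ₁| ≤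
        E * ∫ x, |g₁ x - g₂ x| ∂ρ₁ := by
    intro n g₁ g₂ h1 h2 h12
    rw [← integral_sub h1 h2]
    rw [← Real.norm_eq_abs]
    refine le_trans (norm_integral_le_integral_norm _) ?_
    have hb : ∀ x, ‖f n x * g₁ x - f n x * g₂ x‖ ≤ E * |g₁ x - g₂ x| := by
      intro x
      rw [← mul_sub, Real.norm_eq_abs, abs_mul, abs_of_pos (Real.exp_pos _)]
      exact mul_le_mul_of_nonneg_right (hfb n x) (abs_nonneg _)
    calc (∫ x, ‖f n x * g₁ x - f n x * g₂ x‖ ∂ρ₁)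
        ≤ ∫ x, E * |g₁ x - g₂ x| ∂ρ₁ :=
          integral_mono (h1.sub h2).norm (h12.abs.const_mul E) hb
      _ = E * ∫ x, |g₁ x - g₂ x| ∂ρ₁ := integral_const_mul _ _
  -- bounds on ψ, so that it lives in a compact product of intervals
  set B : ℕ → ℝ := fun k => E * ‖e k‖ with hBdef
  have hψmem : ∀ n, (fun k => ψ n k) ∈ Set.univ.pi fun k => Set.Icc (-(B k)) (B k) := by
    intro n k _
    have hb : |ψ n k| ≤ B k := by
      have h0 : Integrable (fun x => f n x * (0 : ℝ)) ρ₁ := by simpa using integrable_const (0:ℝ)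
      have := hdiff n (⇑(e k)) 0 (hψint n k) h0 (by simpa using hek k)
      simp only [Pi.zero_apply, mul_zero, integral_const, sub_zero] at this
      refine le_trans (by simpa using this) ?_
      rw [hBdef]
      have : (∫ x, |(e k) x - 0| ∂ρ₁) = ‖e k‖ := by
        rw [L1.norm_eq_integral_norm]
        simp [Real.norm_eq_abs]
      simp only [sub_zero] at this ⊢
      rw [this]
    exact abs_le.1 hb
  have hcpt : IsCompact (Set.univ.pi fun k => Set.Icc (-(B k)) (B k)) :=
    isCompact_univ_pi fun k => isCompact_Icc
  obtain ⟨l, -, φ, hφ, hl⟩ := hcpt.tendsto_subseq hψmem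
  have hlk : ∀ k, Tendsto (fun n => ψ (φ n) k) atTop (𝓝 (l k)) := by
    intro k
    exact (tendsto_pi_nhds.1 hl) k
  -- the distance from h y to e k in L¹
  have hyint : ∀ y, Integrable (h y) ρ₁ := by
    intro y
    refine (integral_bounds ρ₁ (hhm y).aestronglyMeasurable
      (a := Real.exp (-M / ε)) (b := Real.exp (M / ε)) ?_ ?_).1
    · intro x
      refine Real.exp_le_exp.2 ?_
      gcongr
      linarith [(abs_le.1 (hM x y)).2]
    · intro x
      refine Real.exp_le_exp.2 ?_
      gcongr
      linarith [(abs_le.1 (hM x y)).1]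
  have hdistL1 : ∀ y k, (∫ x, |h y x - (e k) x| ∂ρ₁) = ‖(hyint y).toL1 (h y) - e k‖ := by
    intro y k
    rw [L1.norm_eq_integral_norm]
    refine (integral_congr_ae ?_).symm
    have h1 : (⇑((hyint y).toL1 (h y) - e k)) =ᵐ[ρ₁] fun x => h y x - (e k) x := by
      filter_upwards [Lp.coeFn_sub ((hyint y).toL1 (h y)) (e k),
        (hyint y).coeFn_toL1] with x hx1 hx2
      rw [hx1, Pi.sub_apply, hx2]
    filter_upwards [h1] with x hx
    rw [hx, Real.norm_eq_abs]
  have hψapprox : ∀ y k j, |Ifun j y - ψ j k| ≤ E * ‖(hyint y).toL1 (h y) - e k‖ := by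
    intro y k j
    have := hdiff j (h y) (⇑(e k)) (hIbd j y).1 (hψint j k) ((hyint y).sub (hek k))
    rw [← hdistL1 y k]
    exact this
  -- extract a pointwise limit of the key integrals along the subsequence
  have hLex : ∀ y, ∃ L, Tendsto (fun n => Ifun (φ n) y) atTop (𝓝 L) := by
    intro y
    refine cauchySeq_tendsto_of_complete ?_
    rw [Metric.cauchySeq_iff]
    intro η hη
    have hη3 : 0 < η / (3 * (E + 1)) := by positivity
    obtain ⟨k, hk⟩ := he.exists_dist_lt ((hyint y).toL1 (h y)) hη3
    rw [dist_eq_norm] at hk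
    have hest : ∀ j, |Ifun (φ j) y - ψ (φ j) k| ≤ η / 3 := by
      intro j
      refine le_trans (hψapprox y k (φ j)) ?_
      have h1 : E * ‖(hyint y).toL1 (h y) - e k‖ ≤ E * (η / (3 * (E + 1))) :=
        mul_le_mul_of_nonneg_left hk.le hEpos.le
      refine le_trans h1 ?_
      rw [← mul_div_assoc, div_le_div_iff₀ (by positivity) (by norm_num : (0:ℝ) < 3)]
      nlinarith [hEpos, hη]
    obtain ⟨N, hN⟩ := Metric.cauchySeq_iff.1 (hlk k).cauchySeq (η / 3) (by positivity)
    refine ⟨N, fun m hm n hn => ?_⟩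
    have h2 := hN m hm n hn
    rw [Real.dist_eq] at h2 ⊢
    calc |Ifun (φ m) y - Ifun (φ n) y|
        ≤ |Ifun (φ m) y - ψ (φ m) k| + |ψ (φ m) k - ψ (φ n) k| +
            |ψ (φ n) k - Ifun (φ n) y| := by
          have := abs_sub_le (Ifun (φ m) y) (ψ (φ m) k) (Ifun (φ n) y)
          have h3 := abs_sub_le (ψ (φ m) k) (ψ (φ n) k) (Ifun (φ n) y)
          linarith
      _ < η / 3 + η / 3 + η / 3 := by
          have h4 := hest m
          have h5 := hest n
          rw [abs_sub_comm] at h5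
          exact add_lt_add_of_lt_of_le (add_lt_add_of_le_of_lt h4 h2) h5
      _ = η := by ring
  choose L hL using hLex
  -- bounds on the limit
  have hLlb : ∀ y, Real.exp (-K / ε) ≤ L y := fun y =>
    ge_of_tendsto (hL y) (Eventually.of_forall fun n => (hIbd (φ n) y).2.1)
  have hLub : ∀ y, L y ≤ Real.exp (K / ε) := fun y =>
    le_of_tendsto (hL y) (Eventually.of_forall fun n => (hIbd (φ n) y).2.2)
  have hLpos : ∀ y, 0 < L y := fun y => lt_of_lt_of_le (Real.exp_pos _) (hLlb y)
  set g : Y → ℝ := fun y => -ε * Real.log (L y) with hgdef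
  -- pointwise convergence of the transforms
  have hpt : ∀ y, Tendsto (fun n => transform ρ₁ c ε (u (φ n)) y) atTop (𝓝 (g y)) := by
    intro y
    simp only [htr]
    exact Tendsto.const_mul (-ε)
      (((Real.continuousAt_log (hLpos y).ne').tendsto).comp (hL y))
  -- measurability
  have hImeas : ∀ n, Measurable fun y => Ifun n y := by
    intro n
    have hm : StronglyMeasurable fun q : Y × X => f n q.2 * h q.1 q.2 := by
      refine Measurable.stronglyMeasurable ?_
      refine ((hfm n).comp measurable_snd).mul ?_
      exact (((hc.comp measurable_swap).neg).div_const ε).exp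
    exact hm.integral_prod_right'.measurable
  have hvmeas : ∀ n, Measurable fun y => transform ρ₁ c ε (u n) y := by
    intro n
    simp only [htr]
    exact ((hImeas n).log).const_mul (-ε)
  have hLmeas : Measurable L :=
    measurable_of_tendsto_metrizable (fun n => hImeas (φ n)) (tendsto_pi_nhds.2 hL)
  have hgmeas : Measurable g := (hLmeas.log).const_mul (-ε)
  -- uniform bounds
  have hlogbd : ∀ {t : ℝ}, Real.exp (-K / ε) ≤ t → t ≤ Real.exp (K / ε) →
      |(-ε) * Real.log t| ≤ K := by
    intro t h1 h2
    have hlog1 : -K / ε ≤ Real.log t := by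
      rw [← Real.log_exp (-K / ε)]
      exact Real.log_le_log (Real.exp_pos _) h1
    have hlog2 : Real.log t ≤ K / ε := by
      rw [← Real.log_exp (K / ε)]
      exact Real.log_le_log (lt_of_lt_of_le (Real.exp_pos _) h1) h2
    rw [abs_mul, abs_neg, abs_of_pos hε]
    have : |Real.log t| ≤ K / ε := by
      rw [abs_le]
      constructor
      · rw [← neg_div]; exact hlog1
      · exact hlog2
    calc ε * |Real.log t| ≤ ε * (K / ε) := mul_le_mul_of_nonneg_left this hε.le
      _ = K := by field_simp
  have hvb : ∀ n y, |transform ρ₁ c ε (u n) y| ≤ K := by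
    intro n y
    rw [htr]
    exact hlogbd (hIbd n y).2.1 (hIbd n y).2.2
  have hgb : ∀ y, |g y| ≤ K := fun y => hlogbd (hLlb y) (hLub y)
  have hgmem : MemLp g p ρ₂ :=
    MemLp.of_bound hgmeas.aestronglyMeasurable K
      (Eventually.of_forall fun y => by rw [Real.norm_eq_abs]; exact hgb y)
  -- uniform integrability
  have hui : UnifIntegrable (fun n y => transform ρ₁ c ε (u (φ n)) y) p ρ₂ := by
    intro η hη
    obtain ⟨δ₀, hδ₀, hδ₀'⟩ := unifIntegrable_const (μ := ρ₂) (ι := ℕ)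
      (g := fun _ : Y => K) hp hp' (memLp_const K) hη
    refine ⟨δ₀, hδ₀, fun i s hs hμs => le_trans (eLpNorm_mono ?_) (hδ₀' i s hs hμs)⟩
    intro y
    by_cases hy : y ∈ s
    · simp only [Set.indicator_of_mem hy, Real.norm_eq_abs]
      exact le_trans (hvb _ y) (le_abs_self K)
    · simp [Set.indicator_of_notMem hy]
  -- conclusion
  have hfinal := tendsto_Lp_finite_of_tendsto_ae (μ := ρ₂) hp hp'
    (fun n => (hvmeas (φ n)).aestronglyMeasurable) hgmem hui
    (Eventually.of_forall hpt)
  exact ⟨φ, g, hφ, hfinal⟩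

end
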